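/- Under the hypotheses of the previous statement, if additionally every p_i(μ) for i ≤ n has degree strictly less than n as a polynomial in μ, then ∏_{j=0}^{n-1}((e-n+1)/2+j) = 0, and hence (assuming e ≡ n-1 mod 2) e ∈ {n-1, n-3, …, -n+1}; in particular e - n < 0. -/

import Mathlib

open PowerSeries Finset

section BennequinAux

/-- Coefficient of `(1 - μ z)^a`. -/
lemma bennequin_coeff_pow (a k : ℕ) :
    PowerSeries.coeff k
      ((1 - PowerSeries.C Polynomial.X * PowerSeries.X) ^ a)
      = (a.choose k : Polynomial ℚ) * (-Polynomial.X) ^ k := by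
  have h1 : (1 - PowerSeries.C (Polynomial.X : Polynomial ℚ) * PowerSeries.X)
      = PowerSeries.C (-Polynomial.X) * PowerSeries.X + 1 := by
    rw [map_neg, neg_mul, sub_eq_add_neg, add_comm]
  rw [h1, add_pow, map_sum]
  have h2 : ∀ i ∈ range (a + 1),
      PowerSeries.coeff k
        ((PowerSeries.C (-Polynomial.X) * PowerSeries.X) ^ i * 1 ^ (a - i)
          * (a.choose i : PowerSeries (Polynomial ℚ)))
      = if k = i then (a.choose i : Polynomial ℚ) * (-Polynomial.X) ^ i else 0 := by
    intro i _
    have hc : (a.choose i : PowerSeries (Polynomial ℚ))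
        = PowerSeries.C (a.choose i : Polynomial ℚ) := by
      rw [map_natCast]
    rw [one_pow, mul_one, mul_pow, ← map_pow, hc, mul_comm, ← mul_assoc, ← map_mul,
      PowerSeries.coeff_C_mul_X_pow]
  rw [Finset.sum_congr rfl h2, Finset.sum_ite_eq (range (a + 1)) k
    (fun i => (a.choose i : Polynomial ℚ) * (-Polynomial.X) ^ i)]
  split_ifs with h
  · rfl
  · rw [Nat.choose_eq_zero_of_lt (by simpa using h), Nat.cast_zero, zero_mul]

lemma bennequin_descPoch (n : ℕ) (r : ℚ) :
    (descPochhammer ℤ n).smeval r = ∏ j ∈ range n, (r - j) := by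
  induction n with
  | zero => simp
  | succ n ih =>
    rw [descPochhammer_succ_right, Polynomial.smeval_mul, ih, prod_range_succ,
      Polynomial.smeval_sub, Polynomial.smeval_X, Polynomial.smeval_natCast]
    push_cast
    ring

end BennequinAux

/-- Key algebraic step: if moreover each `pᵢ` (`i ≤ n`) has `μ`-degree `< n`, then
`∏_{j<n}(m+j) = 0`, hence `e ∈ {n-1, n-3, …, -n+1}`; in particular `e - n < 0`. -/
theorem bennequin_key_step (n : ℕ) (hn : 1 ≤ n) (e m : ℤ)
    (hm : 2 * m = e - (n : ℤ) + 1)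
    (U : (PowerSeries (Polynomial ℚ))ˣ)
    (hU : (U : PowerSeries (Polynomial ℚ)) = 1 - PowerSeries.C Polynomial.X * PowerSeries.X)
    (p : ℕ → Polynomial ℚ)
    (P : PowerSeries (Polynomial ℚ)) (hP : P = PowerSeries.mk p)
    (h0 : PowerSeries.coeff 0 ((↑(U ^ m) : PowerSeries (Polynomial ℚ)) * P) = 1)
    (hvan : ∀ i, 1 ≤ i → i ≤ n →
      PowerSeries.coeff i ((↑(U ^ m) : PowerSeries (Polynomial ℚ)) * P) = 0)
    (hdeg : ∀ i ≤ n, (p i).degree < (n : ℕ)) :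
    (∏ j ∈ Finset.range n, ((m : ℚ) + j)) = 0 ∧
      (-(n : ℤ) + 1 ≤ e ∧ e ≤ (n : ℤ) - 1) ∧ e - (n : ℤ) < 0 := by
  classical
  set N : ℕ := m.natAbs with hN
  set a : ℕ := (m + N).toNat with ha
  have haZ : (a : ℤ) = m + N := by
    rw [ha]; rw [Int.toNat_of_nonneg]; omega
  set Q : PowerSeries (Polynomial ℚ) := (↑(U ^ m) : PowerSeries (Polynomial ℚ)) * P with hQ
  -- power series identity
  have hUnits : ((U : PowerSeries (Polynomial ℚ))) ^ a
      = (↑(U ^ m) : PowerSeries (Polynomial ℚ)) * ((U : PowerSeries (Polynomial ℚ))) ^ N := by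
    have h1 : U ^ (a : ℤ) = U ^ m * U ^ (N : ℤ) := by
      rw [haZ, zpow_add]
    have h2 := congrArg (Units.val) h1
    simpa [zpow_natCast, Units.val_mul] using h2
  have hkey : ∀ k : ℕ,
      PowerSeries.coeff k (((U : PowerSeries (Polynomial ℚ))) ^ a * P)
        = PowerSeries.coeff k (((U : PowerSeries (Polynomial ℚ))) ^ N * Q) := by
    intro k
    rw [hUnits, hQ]
    ring_nf
  -- coefficients of Q
  have hQ0 : PowerSeries.coeff 0 Q = 1 := h0
  have hQi : ∀ j, 1 ≤ j → j ≤ n → PowerSeries.coeff j Q = 0 := hvan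
  -- LHS coefficient
  have hL : ∀ k : ℕ,
      PowerSeries.coeff k (((U : PowerSeries (Polynomial ℚ))) ^ a * P)
        = ∑ ij ∈ Finset.HasAntidiagonal.antidiagonal k,
            (a.choose ij.1 : Polynomial ℚ) * (-Polynomial.X) ^ ij.1 * p ij.2 := by
    intro k
    rw [PowerSeries.coeff_mul]
    refine Finset.sum_congr rfl ?_
    intro ij _
    rw [hU, bennequin_coeff_pow, hP, PowerSeries.coeff_mk]
  -- RHS coefficient for k ≤ n
  have hR : ∀ k : ℕ, k ≤ n →
      PowerSeries.coeff k (((U : PowerSeries (Polynomial ℚ))) ^ N * Q)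
        = (N.choose k : Polynomial ℚ) * (-Polynomial.X) ^ k := by
    intro k hk
    rw [PowerSeries.coeff_mul]
    rw [Finset.sum_eq_single (k, 0)]
    · rw [hU, bennequin_coeff_pow, hQ0, mul_one]
    · intro ij hij hne
      have hsum : ij.1 + ij.2 = k := Finset.HasAntidiagonal.mem_antidiagonal.mp hij
      have hj1 : 1 ≤ ij.2 := by
        rcases Nat.eq_zero_or_pos ij.2 with h | h
        · exfalso; apply hne
          have : ij.1 = k := by omega
          exact Prod.ext this h
        · exact h
      rw [hQi ij.2 hj1 (by omega), mul_zero]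
    · intro h
      exact absurd (Finset.HasAntidiagonal.mem_antidiagonal.mpr (by omega)) h
  -- take the μ^k coefficient
  set d : ℕ → ℚ := fun j => (-1) ^ j * (p j).coeff j with hd
  have hE : ∀ k ≤ n, ∑ ij ∈ Finset.HasAntidiagonal.antidiagonal k,
      (a.choose ij.1 : ℚ) * d ij.2 = (N.choose k : ℚ) := by
    intro k hk
    have h1 := congrArg (fun q : Polynomial ℚ => q.coeff k) ((hL k).symm.trans ((hkey k).trans (hR k hk)))
    rw [Polynomial.finset_sum_coeff] at h1
    have h2 : ∀ ij ∈ Finset.HasAntidiagonal.antidiagonal k,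
        ((a.choose ij.1 : Polynomial ℚ) * (-Polynomial.X) ^ ij.1 * p ij.2).coeff k
          = (a.choose ij.1 : ℚ) * ((-1) ^ ij.1 * (p ij.2).coeff ij.2) := by
      intro ij hij
      have hsum : ij.1 + ij.2 = k := Finset.HasAntidiagonal.mem_antidiagonal.mp hij
      have hx : (-Polynomial.X : Polynomial ℚ) ^ ij.1
          = Polynomial.C ((-1 : ℚ) ^ ij.1) * Polynomial.X ^ ij.1 := by
        rw [neg_pow]
        simp [Polynomial.C_eq_natCast]
      have hnc : (a.choose ij.1 : Polynomial ℚ) = Polynomial.C (a.choose ij.1 : ℚ) := by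
        simp
      rw [hx, hnc, mul_assoc, mul_assoc, Polynomial.coeff_C_mul, Polynomial.coeff_C_mul]
      have : k = ij.2 + ij.1 := by omega
      rw [this, Polynomial.coeff_X_pow_mul]
      try ring
    rw [Finset.sum_congr rfl h2] at h1
    have h3 : ((N.choose k : Polynomial ℚ) * (-Polynomial.X) ^ k).coeff k
        = (N.choose k : ℚ) * (-1) ^ k := by
      have hx : (-Polynomial.X : Polynomial ℚ) ^ k
          = Polynomial.C ((-1 : ℚ) ^ k) * Polynomial.X ^ k := by
        rw [neg_pow]; simp
      have hnc : (N.choose k : Polynomial ℚ) = Polynomial.C (N.choose k : ℚ) := by simp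
      rw [hx, hnc, ← mul_assoc, ← Polynomial.C_mul, Polynomial.coeff_C_mul,
        Polynomial.coeff_X_pow, if_pos rfl]
      ring
    rw [h3] at h1
    -- multiply by (-1)^k
    have h4 := congrArg (fun x : ℚ => (-1 : ℚ) ^ k * x) h1
    simp only [Finset.mul_sum] at h4
    have h5 : ∀ ij ∈ Finset.HasAntidiagonal.antidiagonal k,
        (-1 : ℚ) ^ k * ((a.choose ij.1 : ℚ) * ((-1) ^ ij.1 * (p ij.2).coeff ij.2))
          = (a.choose ij.1 : ℚ) * d ij.2 := by
      intro ij hij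
      have hsum : ij.1 + ij.2 = k := Finset.HasAntidiagonal.mem_antidiagonal.mp hij
      have hsign : (-1 : ℚ) ^ k * (-1) ^ ij.1 = (-1) ^ ij.2 := by
        rw [← hsum, pow_add, mul_comm ((-1 : ℚ) ^ ij.1), mul_assoc, ← mul_pow]
        norm_num
      rw [hd]
      calc (-1 : ℚ) ^ k * ((a.choose ij.1 : ℚ) * ((-1) ^ ij.1 * (p ij.2).coeff ij.2))
          = (a.choose ij.1 : ℚ) * (((-1 : ℚ) ^ k * (-1) ^ ij.1) * (p ij.2).coeff ij.2) := by ring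
        _ = (a.choose ij.1 : ℚ) * ((-1 : ℚ) ^ ij.2 * (p ij.2).coeff ij.2) := by rw [hsign]
    rw [Finset.sum_congr rfl h5] at h4
    rw [h4]
    calc (-1 : ℚ) ^ k * ((N.choose k : ℚ) * (-1) ^ k)
        = (N.choose k : ℚ) * ((-1 : ℚ) ^ k * (-1) ^ k) := by ring
      _ = (N.choose k : ℚ) := by rw [← mul_pow]; norm_num
  -- the comparison sequence satisfies the same equations
  have hE' : ∀ k : ℕ, ∑ ij ∈ Finset.HasAntidiagonal.antidiagonal k,
      (a.choose ij.1 : ℚ) * Ring.choose ((-m : ℤ) : ℚ) ij.2 = (N.choose k : ℚ) := by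
    intro k
    have hadd : ((a : ℚ) + ((-m : ℤ) : ℚ)) = (N : ℚ) := by
      have : (a : ℚ) = ((m : ℚ) + (N : ℚ)) := by exact_mod_cast congrArg (fun z : ℤ => (z : ℚ)) haZ
      rw [this]; push_cast; ring
    have h1 := Ring.add_choose_eq (r := (a : ℚ)) (s := ((-m : ℤ) : ℚ)) k (Commute.all _ _)
    rw [hadd, Ring.choose_natCast] at h1
    rw [h1]
    refine Finset.sum_congr rfl ?_
    intro ij _
    rw [Ring.choose_natCast]
  -- uniqueness by strong induction
  have huniq : ∀ k, k ≤ n → d k = Ring.choose ((-m : ℤ) : ℚ) k := by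
    intro k
    induction k using Nat.strong_induction_on with
    | _ k ih =>
      intro hk
      have h1 := hE k hk
      have h2 := hE' k
      have h3 : ∑ ij ∈ Finset.HasAntidiagonal.antidiagonal k,
          (a.choose ij.1 : ℚ) * (d ij.2 - Ring.choose ((-m : ℤ) : ℚ) ij.2) = 0 := by
        have := sub_eq_zero.mpr (h1.trans h2.symm)
        rw [← Finset.sum_sub_distrib] at this
        rw [← this]
        refine Finset.sum_congr rfl ?_
        intro ij _; ring
      rw [Finset.sum_eq_single (0, k)] at h3
      · have : d k - Ring.choose ((-m : ℤ) : ℚ) k = 0 := by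
          simpa using h3
        linarith [this]
      · intro ij hij hne
        have hsum : ij.1 + ij.2 = k := Finset.HasAntidiagonal.mem_antidiagonal.mp hij
        have hlt : ij.2 < k := by
          rcases Nat.eq_zero_or_pos ij.1 with h | h
          · exfalso; apply hne; exact Prod.ext h (by omega)
          · omega
        rw [ih ij.2 hlt (by omega), sub_self, mul_zero]
      · intro h
        exact absurd (Finset.HasAntidiagonal.mem_antidiagonal.mpr (by omega)) h
  -- d n = 0
  have hdn : d n = 0 := by
    rw [hd]
    simp only
    rw [Polynomial.coeff_eq_zero_of_degree_lt (hdeg n le_rfl), mul_zero]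
  have hchoose0 : Ring.choose ((-m : ℤ) : ℚ) n = 0 := by
    rw [← huniq n le_rfl, hdn]
  -- translate to the product
  have hprod0 : ∏ j ∈ range n, (((-m : ℤ) : ℚ) - j) = 0 := by
    have h := Ring.descPochhammer_eq_factorial_smul_choose (R := ℚ) ((-m : ℤ) : ℚ) n
    rw [bennequin_descPoch, hchoose0, smul_zero] at h
    exact h
  have hprod : (∏ j ∈ Finset.range n, ((m : ℚ) + j)) = 0 := by
    rw [Finset.prod_eq_zero_iff] at hprod0 ⊢
    obtain ⟨j, hj, hj0⟩ := hprod0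
    refine ⟨j, hj, ?_⟩
    push_cast at hj0 ⊢
    linarith
  refine ⟨hprod, ?_⟩
  -- extract j with m = -j
  rw [Finset.prod_eq_zero_iff] at hprod
  obtain ⟨j, hj, hj0⟩ := hprod
  have hjn : j < n := Finset.mem_range.mp hj
  have hmj : m = -(j : ℤ) := by
    have : ((m : ℚ) + (j : ℚ)) = 0 := hj0
    have h2 : ((m + (j : ℤ) : ℤ) : ℚ) = 0 := by push_cast; linarith
    have h3 : m + (j : ℤ) = 0 := by exact_mod_cast h2
    omega
  omega
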